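/- Let θ > 0 and λ > 0. Define M : ℝ → ℝ by M(y) = 1 for y ≤ 0 and M(x) = θ^{⌊x⌋+1} · ∏_{k=0}^{⌊x⌋} (θ + λ(x−k))^{-1} for x > 0. Then for every non-integer x > 0, θ·(M(x−1) − M(x)) = λ·x·M(x). -/

import Mathlib

/-- For the Poisson case, the Laplace transform of the first-passage area,
`M(y) = 1` for `y ≤ 0` and `M(x) = θ^(⌊x⌋+1) ∏_{k=0}^{⌊x⌋} (θ + λ(x-k))⁻¹` for `x > 0`,
satisfies `θ(M(x-1) - M(x)) = λ x M(x)` for every non-integer `x > 0`. -/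
theorem stmt_2 (θ lam : ℝ) (hθ : 0 < θ) (hlam : 0 < lam)
    (M : ℝ → ℝ)
    (hM0 : ∀ y : ℝ, y ≤ 0 → M y = 1)
    (hMpos : ∀ x : ℝ, 0 < x →
      M x = θ ^ (⌊x⌋.toNat + 1) *
        ∏ k ∈ Finset.range (⌊x⌋.toNat + 1), (θ + lam * (x - (k : ℝ)))⁻¹) :
    ∀ x : ℝ, 0 < x → (¬ ∃ n : ℤ, x = (n : ℝ)) →
      θ * (M (x - 1) - M x) = lam * x * M x := by
  intro x hx hnint
  have hne : θ + lam * x ≠ 0 := by positivity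
  have key : (θ + lam * x) * M x = θ * M (x - 1) := by
    have hx1 : x ≠ 1 := fun h => hnint ⟨1, by simp [h]⟩
    rcases lt_or_gt_of_ne hx1 with h1 | h1
    · -- 0 < x < 1
      have hf : ⌊x⌋ = 0 := Int.floor_eq_zero_iff.2 ⟨le_of_lt hx, h1⟩
      have h0 : M (x - 1) = 1 := hM0 _ (by linarith)
      rw [hMpos x hx, hf, h0]
      simp [Finset.prod_range_one]
      field_simp
    · -- x > 1
      have hx1' : (0:ℝ) < x - 1 := by linarith
      have hf1 : ⌊x - 1⌋ = ⌊x⌋ - 1 := by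
        have := Int.floor_sub_intCast x 1
        push_cast at this
        linarith [this]
      have hf1nn : 0 ≤ ⌊x - 1⌋ := Int.floor_nonneg.2 (le_of_lt hx1')
      have htoNat : ⌊x⌋.toNat = ⌊x - 1⌋.toNat + 1 := by omega
      rw [hMpos x hx, hMpos (x - 1) hx1', htoNat]
      rw [Finset.prod_range_succ']
      have hshift : ∀ k : ℕ, (θ + lam * (x - ((k:ℕ)+1 : ℕ))) = θ + lam * ((x - 1) - (k:ℝ)) := by
        intro k; push_cast; ring
      have : (∏ k ∈ Finset.range (⌊x - 1⌋.toNat + 1), (θ + lam * (x - ((k+1 : ℕ) : ℝ)))⁻¹)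
          = ∏ k ∈ Finset.range (⌊x - 1⌋.toNat + 1), (θ + lam * ((x - 1) - (k : ℝ)))⁻¹ := by
        apply Finset.prod_congr rfl
        intro k _
        congr 1
        push_cast
        ring
      rw [this]
      simp only [Nat.cast_zero, sub_zero]
      set P := ∏ k ∈ Finset.range (⌊x - 1⌋.toNat + 1), (θ + lam * (x - 1 - (k : ℝ)))⁻¹ with hP
      rw [pow_succ]
      field_simp
  linear_combination -key
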